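/- Let ν be an integral weight, E = E(ν), and let μ_1,…,μ_m be the distinct weights of E with d_j = dim E_{μ_j}, ordered so that μ_i < μ_j implies i < j on each chain. Let M_j := ∑_{k≥j} U(n^-)(E_{μ_k} ⊗ v_τ) ⊆ E ⊗ M(τ). If for each j an element s_j of the center Z satisfies χ_{τ+μ_j}(s_j) = 0, and z_i := ∏_{j≥i} s_j, then z_i · M_i = 0 for all i; in particular, for a weight vector e ∈ E_{μ_i}, z_{i+1}·(e ⊗ v_τ) = z_{i+1}·pr_{χ(τ+μ_i)}(e ⊗ v_τ). -/
import Mathlib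


/-!
STATEMENT 14 (Lemma "lemma_Z"): bookkeeping with central characters on the
coarsened BGG filtration E ⊗ M(τ) = M_1 ⊇ ⋯ ⊇ M_m ⊇ M_{m+1} = 0.
`Z` is the center of U(g) (a commutative k-algebra), `M` models E ⊗ M(τ)
as a Z-module; `χ j : Z → k` is the central character χ_{τ+μ_j}; a central
element z acts on the subquotient M_j/M_{j+1} ≅ ⊕ M(τ+μ_j) by the scalar
χ_j(z) (hypothesis `hact`).  If χ_j(s_j) = 0 and z_i := ∏_{j≥i} s_j then
z_i · M_i = 0; in particular, if ev = e ⊗ v_τ ∈ M_i and its projection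
prEv = pr_{χ(τ+μ_i)}(e ⊗ v_τ) satisfies ev − prEv ∈ M_{i+1} (the other
central components lie in M_{i+1}), then z_{i+1}·ev = z_{i+1}·prEv.
-/

open Finset

theorem stmt14 {k : Type*} [Field k] {Z : Type*} [CommRing Z] [Algebra k Z]
    {M : Type*} [AddCommGroup M] [Module k M] [Module Z M] [IsScalarTower k Z M]
    (m : ℕ) (Msub : ℕ → Submodule Z M)
    (hchain : ∀ j, Msub (j + 1) ≤ Msub j)
    (hbot : Msub (m + 1) = ⊥)
    (χ : ℕ → (Z →ₐ[k] k))
    -- a central element z acts on M_j/M_{j+1} by the scalar χ_j(z)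
    (hact : ∀ j, 1 ≤ j → j ≤ m → ∀ z : Z, ∀ x ∈ Msub j,
      z • x - χ j z • x ∈ Msub (j + 1))
    (s : ℕ → Z) (hs : ∀ j, 1 ≤ j → j ≤ m → χ j (s j) = 0) :
    (∀ i, 1 ≤ i → ∀ x ∈ Msub i, (∏ j ∈ Finset.Icc i m, s j) • x = 0) ∧
    (∀ i, 1 ≤ i → i ≤ m → ∀ ev prEv : M, ev ∈ Msub i → ev - prEv ∈ Msub (i + 1) →
      (∏ j ∈ Finset.Icc (i + 1) m, s j) • ev =
        (∏ j ∈ Finset.Icc (i + 1) m, s j) • prEv) := by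
  have hle : ∀ a b : ℕ, a ≤ b → Msub b ≤ Msub a := by
    intro a b hab
    induction b, hab using Nat.le_induction with
    | base => exact le_rfl
    | succ n hn ih => exact le_trans (hchain n) ih
  have main : ∀ n i, 1 ≤ i → m + 1 ≤ i + n →
      ∀ x ∈ Msub i, (∏ j ∈ Finset.Icc i m, s j) • x = 0 := by
    intro n
    induction n with
    | zero =>
      intro i _ hi x hx
      have : x ∈ (⊥ : Submodule Z M) := hbot ▸ hle (m + 1) i (by omega) hx
      simp [(Submodule.mem_bot Z).mp this]
    | succ n ih =>
      intro i hi1 hin x hx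
      by_cases him : i ≤ m
      · have hsplit : Finset.Icc i m = Finset.cons i (Finset.Icc (i + 1) m)
            (by simp) := by
          ext a
          simp [Finset.mem_Icc]
          omega
        have hmem : s i • x ∈ Msub (i + 1) := by
          have h1 := hact i hi1 him (s i) x hx
          rw [hs i hi1 him] at h1
          simpa using h1
        have := ih (i + 1) (by omega) (by omega) (s i • x) hmem
        rw [hsplit, Finset.prod_cons, mul_comm, mul_smul, this]
      · have : x ∈ (⊥ : Submodule Z M) := hbot ▸ hle (m + 1) i (by omega) hx
        simp [(Submodule.mem_bot Z).mp this]
  refine ⟨fun i hi x hx => main (m + 1) i hi (by omega) x hx, ?_⟩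
  intro i hi1 him ev prEv hev hdiff
  have h0 := main (m + 1) (i + 1) (by omega) (by omega) (ev - prEv) hdiff
  rw [smul_sub] at h0
  exact sub_eq_zero.mp h0
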